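/- Let (π_n)_{n∈ℕ} be a probability distribution on ℕ with π_n > 0 for every n, and let P be the stochastic matrix on ℕ with P(0,n) = π_n for all n ∈ ℕ and, for n ≥ 1, P(n,0) = π_0 and P(n,n) = 1−π_0. Let V : ℕ → [1,∞) with V(0) = 1, lim_{n→∞} V(n) = +∞ and π(V) := ∑_n π_n V(n) < ∞. Then π is an invariant probability distribution of P, and P is V-geometrically ergodic with ρ_V(P) ≤ 1 − π_0; that is, for every ρ with 1−π_0 < ρ < 1 there exists C > 0 such that for all n ∈ ℕ and all f with ‖f‖_V ≤ 1, ‖P^n f − π(f)·1‖_V ≤ C ρ^n. -/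

import Mathlib

/-- Action of an infinite matrix `P` on functions `f : ℕ → ℂ`: `(Pf)(i) = ∑_j P(i,j) f(j)`. -/
noncomputable def matActC (P : ℕ → ℕ → ℝ) (f : ℕ → ℂ) : ℕ → ℂ :=
  fun i => ∑' j, (P i j : ℂ) * f j

private lemma tsum_pair' {M : Type*} [AddCommMonoid M] [TopologicalSpace M]
    (g : ℕ → M) (m : ℕ) (hm : m ≠ 0)
    (h : ∀ j, j ≠ 0 → j ≠ m → g j = 0) : ∑' j, g j = g 0 + g m := by
  rw [tsum_eq_sum (s := ({0, m} : Finset ℕ))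
    (by intro b hb; simp only [Finset.mem_insert, Finset.mem_singleton, not_or] at hb
        exact h b hb.1 hb.2)]
  exact Finset.sum_pair (Ne.symm hm)

/-- for the reversible random walk `P(0,n) = π_n`, `P(n,0) = π_0`,
`P(n,n) = 1 - π_0` (`n ≥ 1`), the distribution `π` is invariant and `P` is
`V`-geometrically ergodic with `ρ_V(P) ≤ 1 - π_0`. -/
theorem star_rw_rate
    (π : ℕ → ℝ) (hπpos : ∀ n, 0 < π n) (hπsum : HasSum π 1)
    (P : ℕ → ℕ → ℝ)
    (hP0 : ∀ n, P 0 n = π n)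
    (hPn : ∀ n : ℕ, 1 ≤ n → ∀ j, P n j = if j = 0 then π 0 else if j = n then 1 - π 0 else 0)
    (V : ℕ → ℝ) (hV1 : ∀ n, 1 ≤ V n) (hV0 : V 0 = 1)
    (hVtop : Filter.Tendsto V Filter.atTop Filter.atTop)
    (hπV : Summable (fun n => π n * V n)) :
    (∀ j, ∑' i, π i * P i j = π j)
    ∧ ∀ ρ : ℝ, 1 - π 0 < ρ → ρ < 1 →
        ∃ C : ℝ, 0 < C ∧ ∀ n : ℕ, ∀ f : ℕ → ℂ, (∀ m, ‖f m‖ ≤ V m) →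
          ∀ m, ‖(matActC P)^[n] f m - ∑' i, (π i : ℂ) * f i‖ ≤ C * ρ ^ n * V m := by
  have hπ0le : π 0 ≤ 1 := le_hasSum hπsum 0 (fun j _ => (hπpos j).le)
  have hβnn : (0:ℝ) ≤ 1 - π 0 := by linarith
  have hπc : HasSum (fun j => ((π j : ℂ))) 1 := by
    have := hπsum.mapL Complex.ofRealCLM
    simpa using this
  constructor
  · -- invariance
    intro j
    rcases Nat.eq_zero_or_pos j with hj | hj
    · subst hj
      have heq : ∀ i, π i * P i 0 = π 0 * π i := by
        intro i
        rcases Nat.eq_zero_or_pos i with hi | hi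
        · subst hi; rw [hP0]
        · rw [hPn i hi]; simp [mul_comm]
      rw [tsum_congr heq, tsum_mul_left, hπsum.tsum_eq, mul_one]
    · have hj' : j ≠ 0 := by omega
      rw [tsum_pair' (fun i => π i * P i j) j hj'
        (by intro i hi0 him
            have hi : 1 ≤ i := by omega
            show π i * P i j = 0
            rw [hPn i hi, if_neg hj', if_neg (by omega), mul_zero])]
      rw [hP0, hPn j hj, if_neg hj', if_pos rfl]
      ring
  · -- geometric ergodicity
    intro ρ hρl hρu
    have hρ0 : 0 < ρ := lt_of_le_of_lt hβnn hρl
    set πV : ℝ := ∑' n, π n * V n with hπVdef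
    have hπVnn : 0 ≤ πV :=
      tsum_nonneg (fun n => mul_nonneg (hπpos n).le (le_trans zero_le_one (hV1 n)))
    refine ⟨(1 + πV) / ρ, by positivity, ?_⟩
    intro n f hf
    -- summability facts
    have hbound : ∀ i, ‖(π i : ℂ) * f i‖ ≤ π i * V i := by
      intro i
      rw [norm_mul, Complex.norm_real, Real.norm_of_nonneg (hπpos i).le]
      exact mul_le_mul_of_nonneg_left (hf i) (hπpos i).le
    have hsum_norm : Summable (fun i => ‖(π i : ℂ) * f i‖) :=
      Summable.of_nonneg_of_le (fun i => norm_nonneg _) hbound hπV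
    have hsum_πf : Summable (fun i => (π i : ℂ) * f i) :=
      Summable.of_norm_bounded hπV hbound
    set Pif : ℂ := ∑' i, (π i : ℂ) * f i with hPifdef
    have hPif_norm : ‖Pif‖ ≤ πV := by
      calc ‖Pif‖ ≤ ∑' i, ‖(π i : ℂ) * f i‖ := norm_tsum_le_tsum_norm hsum_norm
        _ ≤ πV := Summable.tsum_le_tsum hbound hsum_norm hπV
    -- action formulas
    have step0 : ∀ g : ℕ → ℂ, matActC P g 0 = ∑' j, (π j : ℂ) * g j :=
      fun g => tsum_congr (fun j => by rw [hP0])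
    have stepm : ∀ g : ℕ → ℂ, ∀ m : ℕ, 1 ≤ m →
        matActC P g m = (π 0 : ℂ) * g 0 + ((1:ℂ) - (π 0 : ℂ)) * g m := by
      intro g m hm
      have hm0 : m ≠ 0 := by omega
      unfold matActC
      rw [tsum_pair' _ m hm0
        (by intro j hj0 hjm
            rw [hPn m hm j, if_neg hj0, if_neg hjm]; simp)]
      rw [hPn m hm 0, hPn m hm m, if_pos rfl, if_neg hm0, if_pos rfl]
      push_cast
      ring
    -- explicit iteration formula
    have key : ∀ k : ℕ, (matActC P)^[k+1] f 0 = Pif ∧ ∀ m : ℕ, 1 ≤ m →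
        (matActC P)^[k+1] f m
          = ((1:ℂ) - (π 0 : ℂ))^(k+1) * f m + (π 0 : ℂ) * ((1:ℂ) - (π 0 : ℂ))^k * f 0
            + (1 - ((1:ℂ) - (π 0 : ℂ))^k) * Pif := by
      intro k
      induction k with
      | zero =>
        constructor
        · rw [Function.iterate_one, step0 f, hPifdef]
        · intro m hm
          rw [Function.iterate_one, stepm f m hm]
          ring
      | succ k ih =>
        obtain ⟨ih0, ihm⟩ := ih
        have hgval : ∀ j : ℕ, (π j : ℂ) * (matActC P)^[k+1] f j
            = (((1:ℂ) - (π 0 : ℂ))^(k+1) * ((π j : ℂ) * f j)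
                + ((π 0 : ℂ) * ((1:ℂ) - (π 0 : ℂ))^k * f 0
                    + (1 - ((1:ℂ) - (π 0 : ℂ))^k) * Pif) * (π j : ℂ))
              + (if j = 0 then
                  ((π 0 : ℂ) * Pif
                    - (((1:ℂ) - (π 0 : ℂ))^(k+1) * ((π 0 : ℂ) * f 0)
                      + ((π 0 : ℂ) * ((1:ℂ) - (π 0 : ℂ))^k * f 0
                          + (1 - ((1:ℂ) - (π 0 : ℂ))^k) * Pif) * (π 0 : ℂ)))
                 else 0) := by
          intro j
          rcases Nat.eq_zero_or_pos j with hj | hj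
          · subst hj; rw [ih0, if_pos rfl]; ring
          · rw [ihm j hj, if_neg (by omega)]; ring
        have hsum1 : Summable (fun j : ℕ => ((1:ℂ) - (π 0 : ℂ))^(k+1) * ((π j : ℂ) * f j)) :=
          hsum_πf.mul_left _
        have hsum2 : Summable (fun j : ℕ =>
            ((π 0 : ℂ) * ((1:ℂ) - (π 0 : ℂ))^k * f 0
              + (1 - ((1:ℂ) - (π 0 : ℂ))^k) * Pif) * (π j : ℂ)) :=
          hπc.summable.mul_left _
        constructor
        · rw [Function.iterate_succ_apply', step0, tsum_congr hgval,
            Summable.tsum_add ((hsum1.add hsum2)) (summable_of_ne_finset_zero (s := ({0} : Finset ℕ))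
              (by intro b hb; simp only [Finset.mem_singleton] at hb; simp [hb])),
            tsum_ite_eq, Summable.tsum_add hsum1 hsum2, tsum_mul_left, tsum_mul_left,
            hπc.tsum_eq, ← hPifdef]
          ring
        · intro m hm
          rw [Function.iterate_succ_apply', stepm _ m hm, ih0, ihm m hm]
          ring
    -- conclusion
    intro m
    have hVm : (1:ℝ) ≤ V m := hV1 m
    rcases Nat.eq_zero_or_pos n with hn | hn
    · subst hn
      simp only [Function.iterate_zero, id_eq, pow_zero, mul_one]
      calc ‖f m - Pif‖ ≤ ‖f m‖ + ‖Pif‖ := norm_sub_le _ _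
        _ ≤ V m + πV := add_le_add (hf m) hPif_norm
        _ ≤ (1 + πV) * V m := by nlinarith
        _ ≤ (1 + πV) / ρ * V m := by
            have h1 : (1 + πV) ≤ (1 + πV) / ρ := by
              rw [le_div_iff₀ hρ0]; nlinarith
            nlinarith
    · obtain ⟨k, rfl⟩ : ∃ k, n = k + 1 := ⟨n - 1, by omega⟩
      obtain ⟨key0, keym⟩ := key k
      rcases Nat.eq_zero_or_pos m with hm | hm
      · subst hm
        rw [key0, sub_self, norm_zero]
        positivity
      · rw [keym m hm]
        have hrw : ((1:ℂ) - (π 0 : ℂ))^(k+1) * f m + (π 0 : ℂ) * ((1:ℂ) - (π 0 : ℂ))^k * f 0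
              + (1 - ((1:ℂ) - (π 0 : ℂ))^k) * Pif - Pif
            = ((1:ℂ) - (π 0 : ℂ))^k
                * (((1:ℂ) - (π 0 : ℂ)) * f m + (π 0 : ℂ) * f 0 - Pif) := by ring
        rw [hrw, norm_mul]
        have hβc : ‖((1:ℂ) - (π 0 : ℂ))^k‖ = (1 - π 0)^k := by
          rw [norm_pow]
          congr 1
          rw [show (1:ℂ) - (π 0 : ℂ) = ((1 - π 0 : ℝ) : ℂ) by push_cast; ring,
            Complex.norm_real, Real.norm_of_nonneg hβnn]
        rw [hβc]
        have hinner : ‖((1:ℂ) - (π 0 : ℂ)) * f m + (π 0 : ℂ) * f 0 - Pif‖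
            ≤ (1 + πV) * V m := by
          have h1 : ‖((1:ℂ) - (π 0 : ℂ)) * f m + (π 0 : ℂ) * f 0 - Pif‖
              ≤ ‖((1:ℂ) - (π 0 : ℂ)) * f m‖ + ‖(π 0 : ℂ) * f 0‖ + ‖Pif‖ := by
            calc _ ≤ ‖((1:ℂ) - (π 0 : ℂ)) * f m + (π 0 : ℂ) * f 0‖ + ‖Pif‖ := norm_sub_le _ _
              _ ≤ _ := by gcongr; exact norm_add_le _ _
          have h2 : ‖((1:ℂ) - (π 0 : ℂ)) * f m‖ ≤ (1 - π 0) * V m := by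
            rw [norm_mul, show (1:ℂ) - (π 0 : ℂ) = ((1 - π 0 : ℝ) : ℂ) by push_cast; ring,
              Complex.norm_real, Real.norm_of_nonneg hβnn]
            exact mul_le_mul_of_nonneg_left (hf m) hβnn
          have h3 : ‖(π 0 : ℂ) * f 0‖ ≤ π 0 := by
            rw [norm_mul, Complex.norm_real, Real.norm_of_nonneg (hπpos 0).le]
            calc π 0 * ‖f 0‖ ≤ π 0 * V 0 :=
                  mul_le_mul_of_nonneg_left (hf 0) (hπpos 0).le
              _ = π 0 := by rw [hV0, mul_one]
          nlinarith [hπpos 0, hπpos 0]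
        have hβρ : (1 - π 0)^k ≤ ρ^k := pow_le_pow_left₀ hβnn hρl.le k
        calc (1 - π 0)^k * ‖((1:ℂ) - (π 0 : ℂ)) * f m + (π 0 : ℂ) * f 0 - Pif‖
            ≤ ρ^k * ((1 + πV) * V m) := by
              apply mul_le_mul hβρ hinner (norm_nonneg _) (by positivity)
          _ = (1 + πV) / ρ * ρ ^ (k+1) * V m := by
              field_simp
              ring
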